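/- arXiv:1601.08196 — 5 statements merged into one kernel-verified Lean document; each statement's English description precedes it below -/
import Mathlib

section
/- Let r,s be nonzero complex numbers with r + s ≠ 0, and let V = C^{M|N} with homogeneous basis v_1,...,v_{M+N} where |v_i| = 0 for i ≤ M and |v_i| = 1 for i > M. Define S²V as the span of the vectors v_i⊗v_i for i ≤ M together with v_j⊗v_k + (-1)^{|j||k|} s v_k⊗v_j for j < k, and ∧²V as the span of v_i⊗v_i for i > M together with v_j⊗v_k − (-1)^{|j||k|} r v_k⊗v_j for j < k. Then V⊗V is the internal direct sum of S²V and ∧²V. -/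
open Matrix

noncomputable section

/-- parity of an index: 0 if `i < M` (even), 1 otherwise (odd). -/
def par (M : ℕ) {n : ℕ} (i : Fin n) : ℕ := if (i : ℕ) < M then 0 else 1

/-- basis vector `v_i ⊗ v_j` of `V ⊗ V`, modeled as `Fin n × Fin n → ℂ`. -/
def bas2 {n : ℕ} (i j : Fin n) : Fin n × Fin n → ℂ := fun p => if p = (i, j) then 1 else 0

/-- `S²V`: span of `v_i⊗v_i` for `i ≤ M` together with
`v_j⊗v_k + (-1)^{|j||k|} s v_k⊗v_j` for `j < k`. -/
def S2 (n M : ℕ) (s : ℂ) : Submodule ℂ (Fin n × Fin n → ℂ) :=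
  Submodule.span ℂ
    ({v | ∃ i : Fin n, (i : ℕ) < M ∧ v = bas2 i i} ∪
     {v | ∃ j k : Fin n, j < k ∧
        v = bas2 j k + ((-1 : ℂ) ^ (par M j * par M k) * s) • bas2 k j})

/-- `∧²V`: span of `v_i⊗v_i` for `i > M` together with
`v_j⊗v_k − (-1)^{|j||k|} r v_k⊗v_j` for `j < k`. -/
def W2 (n M : ℕ) (r : ℂ) : Submodule ℂ (Fin n × Fin n → ℂ) :=
  Submodule.span ℂ
    ({v | ∃ i : Fin n, M ≤ (i : ℕ) ∧ v = bas2 i i} ∪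
     {v | ∃ j k : Fin n, j < k ∧
        v = bas2 j k - ((-1 : ℂ) ^ (par M j * par M k) * r) • bas2 k j})

/-! ### Auxiliary machinery: an explicit projection onto `S²V` along `∧²V`. -/

/-- the sign `(-1)^{|j||k|}`. -/
def eps (M : ℕ) {n : ℕ} (j k : Fin n) : ℂ := (-1 : ℂ) ^ (par M j * par M k)

lemma eps_comm (M : ℕ) {n : ℕ} (j k : Fin n) : eps M j k = eps M k j := by
  rw [eps, eps, Nat.mul_comm]

lemma eps_mul_self (M : ℕ) {n : ℕ} (j k : Fin n) : eps M j k * eps M j k = 1 := by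
  rw [eps, ← pow_add, ← two_mul, pow_mul]; norm_num

/-- The projection onto `S²V` along `∧²V`, defined componentwise. -/
def Pmap (n M : ℕ) (r s : ℂ) : (Fin n × Fin n → ℂ) →ₗ[ℂ] (Fin n × Fin n → ℂ) where
  toFun f p :=
    if p.1 = p.2 then (if (p.1 : ℕ) < M then f p else 0)
    else if p.1 < p.2 then (r + s)⁻¹ * (r * f p + eps M p.1 p.2 * f (p.2, p.1))
    else (r + s)⁻¹ * (s * f p + eps M p.1 p.2 * r * s * f (p.2, p.1))
  map_add' f g := by
    funext p
    simp only [Pi.add_apply]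
    split_ifs <;> ring
  map_smul' c f := by
    funext p
    simp only [Pi.smul_apply, RingHom.id_apply, smul_eq_mul]
    split_ifs <;> ring

lemma Pmap_pair (n M : ℕ) (r s : ℂ) {j k : Fin n} (h : j < k) (x y : ℂ) :
    Pmap n M r s (x • bas2 j k + y • bas2 k j) =
      ((r + s)⁻¹ * (r * x + eps M j k * y)) • bas2 j k +
      ((r + s)⁻¹ * (s * y + eps M j k * r * s * x)) • bas2 k j := by
  have hne : j ≠ k := h.ne
  have hkj : ¬ k < j := h.asymm
  funext p
  by_cases h1 : p = (j, k)
  · subst h1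
    simp [Pmap, bas2, hne, h, Ne.symm hne, Prod.ext_iff]
  · by_cases h2 : p = (k, j)
    · subst h2
      simp [Pmap, bas2, hne, hkj, Ne.symm hne, Prod.ext_iff, eps_comm M k j]
    · obtain ⟨a, b⟩ := p
      have h3 : ((b, a) : Fin n × Fin n) ≠ (j, k) := by
        intro hh; apply h2; rw [Prod.mk.injEq] at hh ⊢; exact ⟨hh.2, hh.1⟩
      have h4 : ((b, a) : Fin n × Fin n) ≠ (k, j) := by
        intro hh; apply h1; rw [Prod.mk.injEq] at hh ⊢; exact ⟨hh.2, hh.1⟩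
      simp only [Pmap, LinearMap.coe_mk, AddHom.coe_mk, Pi.add_apply, Pi.smul_apply, bas2,
        smul_eq_mul, if_neg h1, if_neg h2, if_neg h3, if_neg h4]
      split_ifs <;> ring

lemma Pmap_diag (n M : ℕ) (r s : ℂ) (i : Fin n) :
    Pmap n M r s (bas2 i i) = if (i : ℕ) < M then bas2 i i else 0 := by
  funext p
  by_cases h1 : p = (i, i)
  · subst h1
    by_cases hi : (i : ℕ) < M <;> simp [Pmap, bas2, hi]
  · obtain ⟨a, b⟩ := p
    have h3 : ((b, a) : Fin n × Fin n) ≠ (i, i) := by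
      intro hh; apply h1; rw [Prod.mk.injEq] at hh ⊢; exact ⟨hh.2, hh.1⟩
    by_cases hi : (i : ℕ) < M <;>
    · simp only [Pmap, LinearMap.coe_mk, AddHom.coe_mk, bas2, if_neg h1, if_neg h3, hi,
        if_true, if_false, Pi.zero_apply]
      split_ifs <;> ring

lemma Pmap_eq_self (n M : ℕ) (r s : ℂ) (hrs : r + s ≠ 0) {v : Fin n × Fin n → ℂ}
    (hv : v ∈ S2 n M s) : Pmap n M r s v = v := by
  induction hv using Submodule.span_induction with
  | mem x hx =>
    rcases hx with ⟨i, hi, rfl⟩ | ⟨j, k, hjk, rfl⟩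
    · rw [Pmap_diag, if_pos hi]
    · have e := eps_mul_self M j k
      have h1 : bas2 j k + ((-1 : ℂ) ^ (par M j * par M k) * s) • bas2 k j
          = (1 : ℂ) • bas2 j k + (eps M j k * s) • bas2 k j := by
        rw [one_smul]; rfl
      rw [h1, Pmap_pair n M r s hjk]
      have c1 : (r + s)⁻¹ * (r * 1 + eps M j k * (eps M j k * s)) = 1 := by
        field_simp; linear_combination s * e
      have c2 : (r + s)⁻¹ * (s * (eps M j k * s) + eps M j k * r * s * 1) = eps M j k * s := by
        field_simp; ring
      rw [c1, c2, one_smul]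
  | zero => simp
  | add x y _ _ hx hy => rw [map_add, hx, hy]
  | smul c x _ hx => rw [_root_.map_smul, hx]

lemma Pmap_eq_zero (n M : ℕ) (r s : ℂ) (hrs : r + s ≠ 0) {v : Fin n × Fin n → ℂ}
    (hv : v ∈ W2 n M r) : Pmap n M r s v = 0 := by
  induction hv using Submodule.span_induction with
  | mem x hx =>
    rcases hx with ⟨i, hi, rfl⟩ | ⟨j, k, hjk, rfl⟩
    · rw [Pmap_diag, if_neg (not_lt.mpr hi)]
    · have e := eps_mul_self M j k
      have h1 : bas2 j k - ((-1 : ℂ) ^ (par M j * par M k) * r) • bas2 k j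
          = (1 : ℂ) • bas2 j k + (-(eps M j k * r)) • bas2 k j := by
        rw [one_smul, neg_smul, ← sub_eq_add_neg]; rfl
      rw [h1, Pmap_pair n M r s hjk]
      have c1 : (r + s)⁻¹ * (r * 1 + eps M j k * -(eps M j k * r)) = 0 := by
        field_simp; linear_combination (-r) * e
      have c2 : (r + s)⁻¹ * (s * -(eps M j k * r) + eps M j k * r * s * 1) = 0 := by
        field_simp; ring
      rw [c1, c2, zero_smul, zero_smul, add_zero]
  | zero => simp
  | add x y _ _ hx hy => rw [map_add, hx, hy, add_zero]
  | smul c x _ hx => rw [_root_.map_smul, hx, smul_zero]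

lemma bas2_mem_sup (n M : ℕ) (r s : ℂ) (hrs : r + s ≠ 0) (a b : Fin n) :
    bas2 a b ∈ S2 n M s ⊔ W2 n M r := by
  have hpair : ∀ j k : Fin n, j < k →
      bas2 j k ∈ S2 n M s ⊔ W2 n M r ∧ bas2 k j ∈ S2 n M s ⊔ W2 n M r := by
    intro j k hjk
    set u := bas2 j k + ((-1 : ℂ) ^ (par M j * par M k) * s) • bas2 k j with hu
    set w := bas2 j k - ((-1 : ℂ) ^ (par M j * par M k) * r) • bas2 k j with hw
    have huS : u ∈ S2 n M s := Submodule.subset_span (Or.inr ⟨j, k, hjk, rfl⟩)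
    have hwW : w ∈ W2 n M r := Submodule.subset_span (Or.inr ⟨j, k, hjk, rfl⟩)
    have hu' : u ∈ S2 n M s ⊔ W2 n M r := Submodule.mem_sup_left huS
    have hw' : w ∈ S2 n M s ⊔ W2 n M r := Submodule.mem_sup_right hwW
    have e := eps_mul_self M j k
    have heq : (eps M j k : ℂ) = (-1 : ℂ) ^ (par M j * par M k) := rfl
    constructor
    · have key : r • u + s • w = (r + s) • bas2 j k := by
        rw [hu, hw]; module
      have : bas2 j k = (r + s)⁻¹ • (r • u + s • w) := by
        rw [key, smul_smul, inv_mul_cancel₀ hrs, one_smul]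
      rw [this]
      exact Submodule.smul_mem _ _ (add_mem (Submodule.smul_mem _ _ hu')
        (Submodule.smul_mem _ _ hw'))
    · have key : u - w = (eps M j k * (r + s)) • bas2 k j := by
        rw [hu, hw, heq]; module
      have : bas2 k j = ((r + s)⁻¹ * eps M j k) • (u - w) := by
        rw [key, smul_smul]
        have : (r + s)⁻¹ * eps M j k * (eps M j k * (r + s)) = 1 := by
          field_simp; linear_combination e
        rw [this, one_smul]
      rw [this]
      exact Submodule.smul_mem _ _ (sub_mem hu' hw')
  rcases lt_trichotomy a b with hab | rfl | hab
  · exact (hpair a b hab).1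
  · by_cases hi : (a : ℕ) < M
    · exact Submodule.mem_sup_left (Submodule.subset_span (Or.inl ⟨a, hi, rfl⟩))
    · exact Submodule.mem_sup_right (Submodule.subset_span (Or.inl ⟨a, not_lt.mp hi, rfl⟩))
  · exact (hpair b a hab).2

/-- for `r,s ≠ 0` with `r + s ≠ 0`, `V⊗V` is the internal direct sum
of `S²V` and `∧²V`. -/
theorem stmt0 (M N : ℕ) (r s : ℂ) (hr : r ≠ 0) (hs : s ≠ 0) (hrs : r + s ≠ 0) :
    IsCompl (S2 (M + N) M s) (W2 (M + N) M r) := by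
  constructor
  · rw [disjoint_iff_inf_le]
    intro x ⟨hxS, hxW⟩
    have h1 := Pmap_eq_self (M + N) M r s hrs hxS
    have h2 := Pmap_eq_zero (M + N) M r s hrs hxW
    simpa [h2] using h1.symm
  · rw [codisjoint_iff_le_sup]
    intro f _
    rw [pi_eq_sum_univ f]
    refine Submodule.sum_mem _ fun p _ => Submodule.smul_mem _ _ ?_
    have : (fun j => if p = j then (1 : ℂ) else 0) = bas2 p.1 p.2 := by
      funext q
      simp only [bas2, Prod.mk.eta]
      exact if_congr eq_comm rfl rfl
    rw [this]
    exact bas2_mem_sup (M + N) M r s hrs p.1 p.2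

end
end

section
/- Let r,s be nonzero complex numbers with r+s ≠ 0, V = C^{M|N}, and let P, Q be the projections onto S²V and ∧²V respectively along the direct sum decomposition V⊗V = S²V ⊕ ∧²V. Define R̂ = rP − sQ and R = c∘R̂ where c(v_i⊗v_j) = (−1)^{|i||j|} v_j⊗v_i is the graded permutation. Then R = (r Σ_{i≤M} + s Σ_{i>M}) E_{ii}⊗E_{ii} + (Σ_{i>j} + rs Σ_{i<j}) E_{ii}⊗E_{jj} + (r−s) Σ_{i<j} (−1)^{|i|} E_{ji}⊗E_{ij}, where E_{ij} is the matrix unit sending v_k to δ_{jk} v_i. -/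
open Matrix
open scoped Kronecker

noncomputable section

/-- matrix unit `E_{ij}`. -/
def E {n : ℕ} (i j : Fin n) : Matrix (Fin n) (Fin n) ℂ := Matrix.single i j 1

/-- the graded permutation `c : v_i⊗v_j ↦ (−1)^{|i||j|} v_j⊗v_i`, as a matrix. -/
def cM (n M : ℕ) : Matrix (Fin n × Fin n) (Fin n × Fin n) ℂ :=
  fun p q => if p.1 = q.2 ∧ p.2 = q.1 then (-1 : ℂ) ^ (par M q.1 * par M q.2) else 0

/-- the Perk–Schultz matrix
`R = (rΣ_{i≤M}+sΣ_{i>M}) E_{ii}⊗E_{ii} + (Σ_{i>j}+rsΣ_{i<j}) E_{ii}⊗E_{jj}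
 + (r−s)Σ_{i<j}(−1)^{|i|} E_{ji}⊗E_{ij}`. -/
def PS (n M : ℕ) (r s : ℂ) : Matrix (Fin n × Fin n) (Fin n × Fin n) ℂ :=
  (∑ i : Fin n, (if (i : ℕ) < M then r else s) • (E i i ⊗ₖ E i i))
  + (∑ i : Fin n, ∑ j : Fin n, (if j < i then (1 : ℂ) else 0) • (E i i ⊗ₖ E j j))
  + (∑ i : Fin n, ∑ j : Fin n, (if i < j then r * s else 0) • (E i i ⊗ₖ E j j))
  + (∑ i : Fin n, ∑ j : Fin n,
      (if i < j then (r - s) * (-1 : ℂ) ^ (par M i) else 0) • (E j i ⊗ₖ E i j))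

/- ### auxiliary lemmas -/

lemma entry_eq {n : ℕ} (A : Matrix (Fin n × Fin n) (Fin n × Fin n) ℂ)
    (p : Fin n × Fin n) (i j : Fin n) :
    A.mulVec (bas2 i j) p = A p (i, j) := by
  have : (bas2 i j : Fin n × Fin n → ℂ) = Pi.single (i, j) 1 := by
    funext t; simp [bas2, Pi.single_apply]
  rw [this, Matrix.mulVec_single]; exact mul_one _

lemma cM_mul_apply {n M : ℕ} (A : Matrix (Fin n × Fin n) (Fin n × Fin n) ℂ)
    (p q : Fin n × Fin n) :
    (cM n M * A) p q = (-1:ℂ)^(par M p.2 * par M p.1) * A (p.2, p.1) q := by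
  rw [Matrix.mul_apply, Finset.sum_eq_single (p.2, p.1)]
  · simp [cM]
  · rintro ⟨t1, t2⟩ _ hne
    simp only [cM]
    split_ifs with h
    · exact absurd (by simp [Prod.ext_iff, h.1.symm, h.2.symm]) hne
    · simp
  · simp

lemma neg_one_sq_pow (k : ℕ) : ((-1:ℂ))^k * ((-1:ℂ))^k = 1 := by
  rw [← pow_add]
  rcases Nat.even_or_odd (k + k) with h | h
  · exact h.neg_one_pow
  · exact absurd h (by simp [Nat.even_add])

lemma par_mul_lt {n M : ℕ} {a b : Fin n} (h : a < b) :
    ((-1:ℂ))^(par M a * par M b) = (-1:ℂ)^(par M a) := by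
  unfold par
  by_cases ha : (a:ℕ) < M
  · simp [ha]
  · have hb : ¬ (b:ℕ) < M := fun hb => ha (lt_trans h hb)
    simp [ha, hb]

lemma ite_congr0 {A B : Prop} [Decidable A] [Decidable B] {c1 c2 : ℂ}
    (h : A ↔ B) (h2 : A → c1 = c2) : (if A then c1 else 0) = (if B then c2 else 0) := by
  split_ifs with hA hB hB
  · exact h2 hA
  · exact absurd (h.mp hA) hB
  · exact absurd (h.mpr hB) hA
  · rfl

lemma kron_apply {n : ℕ} (i j k l : Fin n) (p q : Fin n × Fin n) :
    (E i j ⊗ₖ E k l) p q = if p = (i, k) ∧ q = (j, l) then 1 else 0 := by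
  simp only [Matrix.kroneckerMap_apply, E, Matrix.single, Matrix.of_apply,
    Prod.ext_iff]
  split_ifs <;> simp_all

lemma sum2_apply {n : ℕ} (c : Fin n → Fin n → ℂ) (f g : Fin n → Fin n → Fin n)
    (p q : Fin n × Fin n) :
    (∑ i : Fin n, ∑ j : Fin n, (c i j) • (E (f i j) i ⊗ₖ E (g i j) j)) p q
      = if p = (f q.1 q.2, g q.1 q.2) then c q.1 q.2 else 0 := by
  rw [Matrix.sum_apply]
  rw [Finset.sum_eq_single q.1]
  · rw [Matrix.sum_apply]
    rw [Finset.sum_eq_single q.2]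
    · rw [Matrix.smul_apply, kron_apply]
      simp [smul_eq_mul]
    · intro j _ hj
      rw [Matrix.smul_apply, kron_apply]
      have : ¬ (p = (f q.1 j, g q.1 j) ∧ q = (q.1, j)) := by
        rintro ⟨-, h2⟩; exact hj (congrArg Prod.snd h2).symm
      simp [this]
    · simp
  · intro i _ hi
    rw [Matrix.sum_apply]
    apply Finset.sum_eq_zero
    intro j _
    rw [Matrix.smul_apply, kron_apply]
    have : ¬ (p = (f i j, g i j) ∧ q = (i, j)) := by
      rintro ⟨-, h2⟩; exact hi (congrArg Prod.fst h2).symm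
    simp [this]
  · simp

lemma PS_apply (n M : ℕ) (r s : ℂ) (p q : Fin n × Fin n) :
    PS n M r s p q =
      (if p.1 = p.2 ∧ p = q then (if (p.1 : ℕ) < M then r else s) else 0)
      + (if q.2 < q.1 ∧ p = q then 1 else 0)
      + (if q.1 < q.2 ∧ p = q then r * s else 0)
      + (if q.1 < q.2 ∧ p = (q.2, q.1) then (r - s) * (-1:ℂ) ^ (par M q.1) else 0) := by
  have h1 : (∑ i : Fin n, (if (i : ℕ) < M then r else s) • (E i i ⊗ₖ E i i)) p q
      = if p.1 = p.2 ∧ p = q then (if (p.1 : ℕ) < M then r else s) else 0 := by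
    rw [Matrix.sum_apply, Finset.sum_eq_single q.1]
    · rw [Matrix.smul_apply, kron_apply, smul_eq_mul, mul_ite, mul_one, mul_zero]
      refine ite_congr0 ?_ ?_
      · constructor
        · rintro ⟨h1, h2⟩; exact ⟨by rw [h1], h1.trans h2.symm⟩
        · rintro ⟨h1, h2⟩
          subst h2
          have hp : p = (p.1, p.1) := Prod.ext_iff.mpr ⟨rfl, h1.symm⟩
          exact ⟨hp, hp⟩
      · rintro ⟨h1, -⟩; rw [show p.1 = q.1 by rw [h1]]
    · intro i _ hi
      rw [Matrix.smul_apply, kron_apply]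
      have : ¬ (p = (i, i) ∧ q = (i, i)) := by
        rintro ⟨-, h2⟩; exact hi (congrArg Prod.fst h2).symm
      simp [this]
    · simp
  have h2 : (∑ i : Fin n, ∑ j : Fin n, (if j < i then (1:ℂ) else 0) • (E i i ⊗ₖ E j j)) p q
      = if q.2 < q.1 ∧ p = q then 1 else 0 := by
    rw [sum2_apply (fun i j => if j < i then (1:ℂ) else 0) (fun i _ => i) (fun _ j => j) p q]
    by_cases h : p = q <;> by_cases h' : q.2 < q.1 <;> simp_all
  have h3 : (∑ i : Fin n, ∑ j : Fin n, (if i < j then r * s else 0) • (E i i ⊗ₖ E j j)) p q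
      = if q.1 < q.2 ∧ p = q then r * s else 0 := by
    rw [sum2_apply (fun i j => if i < j then r * s else 0) (fun i _ => i) (fun _ j => j) p q]
    by_cases h : p = q <;> by_cases h' : q.1 < q.2 <;> simp_all
  have h4 : (∑ i : Fin n, ∑ j : Fin n,
        (if i < j then (r - s) * (-1:ℂ) ^ (par M i) else 0) • (E j i ⊗ₖ E i j)) p q
      = if q.1 < q.2 ∧ p = (q.2, q.1) then (r - s) * (-1:ℂ) ^ (par M q.1) else 0 := by
    rw [sum2_apply (fun i j => if i < j then (r - s) * (-1:ℂ) ^ (par M i) else 0)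
      (fun _ j => j) (fun i _ => i) p q]
    by_cases h : p = (q.2, q.1) <;> by_cases h' : q.1 < q.2 <;> simp_all
  rw [PS, Matrix.add_apply, Matrix.add_apply, Matrix.add_apply, h1, h2, h3, h4]

/-- with `P`, `Q` the projections onto `S²V` and `∧²V` along the
decomposition `V⊗V = S²V ⊕ ∧²V`, and `R̂ = rP − sQ`, the matrix `R = c∘R̂` is given
by the explicit Perk–Schultz formula. -/
theorem stmt1 (M N : ℕ) (r s : ℂ) (hr : r ≠ 0) (hs : s ≠ 0) (hrs : r + s ≠ 0)
    (P Q : Matrix (Fin (M + N) × Fin (M + N)) (Fin (M + N) × Fin (M + N)) ℂ)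
    (hP1 : ∀ v ∈ S2 (M + N) M s, P.mulVec v = v)
    (hP2 : ∀ v ∈ W2 (M + N) M r, P.mulVec v = 0)
    (hQ1 : ∀ v ∈ S2 (M + N) M s, Q.mulVec v = 0)
    (hQ2 : ∀ v ∈ W2 (M + N) M r, Q.mulVec v = v) :
    cM (M + N) M * (r • P - s • Q) = PS (M + N) M r s := by
  have hAS : ∀ v ∈ S2 (M + N) M s, (r • P - s • Q).mulVec v = r • v := by
    intro v hv
    rw [Matrix.sub_mulVec, Matrix.smul_mulVec, Matrix.smul_mulVec,
      hP1 v hv, hQ1 v hv, smul_zero, sub_zero]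
  have hAW : ∀ v ∈ W2 (M + N) M r, (r • P - s • Q).mulVec v = (-s) • v := by
    intro v hv
    rw [Matrix.sub_mulVec, Matrix.smul_mulVec, Matrix.smul_mulVec,
      hP2 v hv, hQ2 v hv, smul_zero, zero_sub, neg_smul]
  -- diagonal columns
  have hdiag : ∀ i : Fin (M+N), ∀ p : Fin (M+N) × Fin (M+N), (r • P - s • Q) p (i, i) =
      (if (i:ℕ) < M then r else -s) * (if p = (i, i) then 1 else 0) := by
    intro i p
    by_cases hi : (i:ℕ) < M
    · have hv : bas2 i i ∈ S2 (M+N) M s := Submodule.subset_span (Or.inl ⟨i, hi, rfl⟩)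
      calc (r • P - s • Q) p (i, i) = ((r • P - s • Q).mulVec (bas2 i i)) p := (entry_eq (r • P - s • Q) p i i).symm
        _ = (r • bas2 i i) p := by rw [hAS _ hv]
        _ = _ := by simp [bas2, hi]
    · have hv : bas2 i i ∈ W2 (M+N) M r :=
        Submodule.subset_span (Or.inl ⟨i, le_of_not_gt hi, rfl⟩)
      calc (r • P - s • Q) p (i, i) = ((r • P - s • Q).mulVec (bas2 i i)) p := (entry_eq (r • P - s • Q) p i i).symm
        _ = ((-s) • bas2 i i) p := by rw [hAW _ hv]
        _ = _ := by simp [bas2, hi]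
  -- off-diagonal columns
  have hcol : ∀ j k : Fin (M+N), j < k → ∀ p : Fin (M+N) × Fin (M+N),
      (r • P - s • Q) p (j, k) = (r - s) * bas2 j k p
          + (-1:ℂ)^(par M j * par M k) * (r*s) * bas2 k j p
      ∧ (r • P - s • Q) p (k, j) = (-1:ℂ)^(par M j * par M k) * bas2 j k p := by
    intro j k hjk p
    set ε : ℂ := (-1:ℂ)^(par M j * par M k) with hε
    have hε2 : ε * ε = 1 := neg_one_sq_pow _
    have hx := hAS _ (Submodule.subset_span (Or.inr ⟨j, k, hjk, rfl⟩))
    have hy := hAW _ (Submodule.subset_span (Or.inr ⟨j, k, hjk, rfl⟩))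
    have e1 : (r • P - s • Q) p (j, k) + (ε*s) * (r • P - s • Q) p (k, j)
        = r * (bas2 j k p + (ε*s) * bas2 k j p) := by
      have h := congrFun hx p
      rw [Matrix.mulVec_add, Matrix.mulVec_smul] at h
      simpa [entry_eq, smul_eq_mul] using h
    have e2 : (r • P - s • Q) p (j, k) - (ε*r) * (r • P - s • Q) p (k, j)
        = (-s) * (bas2 j k p - (ε*r) * bas2 k j p) := by
      have h := congrFun hy p
      rw [Matrix.mulVec_sub, Matrix.mulVec_smul] at h
      simpa [entry_eq, smul_eq_mul] using h
    have ekj : (r • P - s • Q) p (k, j) = ε * bas2 j k p := by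
      have key : (r+s) * (r • P - s • Q) p (k, j) = (r+s) * (ε * bas2 j k p) := by
        linear_combination ε * e1 - ε * e2 - ((r+s) * (r • P - s • Q) p (k, j)) * hε2
      exact mul_left_cancel₀ hrs key
    refine ⟨?_, ekj⟩
    linear_combination e1 - (ε*s) * ekj - (s * bas2 j k p) * hε2
  -- entrywise comparison
  apply Matrix.ext
  rintro ⟨p1, p2⟩ ⟨q1, q2⟩
  rw [cM_mul_apply, PS_apply]
  rcases lt_trichotomy q1 q2 with h | h | h
  · -- q1 < q2
    have hc1 := (hcol q1 q2 h (p2, p1)).1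
    simp only [] at hc1 ⊢
    rw [hc1]
    have hne : q1 ≠ q2 := ne_of_lt h
    have hnlt : ¬ q2 < q1 := asymm h
    by_cases hp : (p1, p2) = (q2, q1)
    · have hp1 : p1 = q2 := congrArg Prod.fst hp
      have hp2 : p2 = q1 := congrArg Prod.snd hp
      have hb1 : bas2 q1 q2 (p2, p1) = 1 := by simp [bas2, hp1, hp2]
      have hb2 : bas2 q2 q1 (p2, p1) = 0 := by
        simp [bas2, hp1, hp2, Prod.ext_iff]
        intro h1; exact absurd h1 hne
      have hpq : ¬ ((p1, p2) = (q1, q2)) := by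
        simp only [Prod.mk.injEq]
        rintro ⟨a, b⟩; exact hne (a.symm.trans hp1)
      have hphase : (-1:ℂ)^(par M p2 * par M p1) = (-1:ℂ)^(par M q1) := by
        rw [hp1, hp2, par_mul_lt h]
      rw [hb1, hb2, hphase]
      have c1 : ¬ ((p1, p2).1 = (p1, p2).2 ∧ (p1, p2) = (q1, q2)) := fun hh => hpq hh.2
      simp only [if_pos (And.intro h hp), if_neg c1, if_neg (fun hh => hpq hh.2 : ¬ (q2 < q1 ∧ (p1,p2) = (q1,q2))), if_neg (fun hh => hpq hh.2 : ¬ (q1 < q2 ∧ (p1,p2)=(q1,q2)))]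
      ring
    · by_cases hpq : (p1, p2) = (q1, q2)
      · have hp1 : p1 = q1 := congrArg Prod.fst hpq
        have hp2 : p2 = q2 := congrArg Prod.snd hpq
        have hb1 : bas2 q1 q2 (p2, p1) = 0 := by
          simp [bas2, hp1, hp2, Prod.ext_iff]
          intro h1; exact absurd h1 (Ne.symm hne)
        have hb2 : bas2 q2 q1 (p2, p1) = 1 := by simp [bas2, hp1, hp2]
        have hphase : (-1:ℂ)^(par M p2 * par M p1) = (-1:ℂ)^(par M q1 * par M q2) := by
          rw [hp1, hp2, Nat.mul_comm]
        have c1 : ¬ ((p1, p2).1 = (p1, p2).2 ∧ (p1, p2) = (q1, q2)) := by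
          rintro ⟨a, -⟩
          exact hne ((hp1.symm.trans a).trans hp2)
        rw [hb1, hb2, hphase]
        simp only [if_pos (And.intro h hpq), if_neg c1,
          if_neg (fun hh => hnlt hh.1 : ¬ (q2 < q1 ∧ (p1,p2) = (q1,q2))),
          if_neg (fun hh => hp hh.2 : ¬ (q1 < q2 ∧ (p1,p2) = (q2,q1)))]
        have := neg_one_sq_pow (par M q1 * par M q2)
        linear_combination (r * s) * this
      · have hb1 : bas2 q1 q2 (p2, p1) = 0 := by
          simp [bas2, Prod.ext_iff]
          rintro a b; exact absurd (by rw [a, b] : (p1, p2) = (q2, q1)) hp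
        have hb2 : bas2 q2 q1 (p2, p1) = 0 := by
          simp [bas2, Prod.ext_iff]
          rintro a b; exact absurd (by rw [a, b] : (p1, p2) = (q1, q2)) hpq
        rw [hb1, hb2]
        simp only [if_neg (fun hh => hpq hh.2 : ¬ ((p1,p2).1 = (p1,p2).2 ∧ (p1,p2) = (q1,q2))),
          if_neg (fun hh => hnlt hh.1 : ¬ (q2 < q1 ∧ (p1,p2) = (q1,q2))),
          if_neg (fun hh => hpq hh.2 : ¬ (q1 < q2 ∧ (p1,p2) = (q1,q2))),
          if_neg (fun hh => hp hh.2 : ¬ (q1 < q2 ∧ (p1,p2) = (q2,q1)))]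
        ring
  · -- q1 = q2
    subst h
    have hd := hdiag q1 (p2, p1)
    simp only [] at hd ⊢
    rw [hd]
    have hirr : ¬ q1 < q1 := lt_irrefl _
    by_cases hp : (p1, p2) = (q1, q1)
    · have hp1 : p1 = q1 := congrArg Prod.fst hp
      have hp2 : p2 = q1 := congrArg Prod.snd hp
      have hb : ((p2, p1) : Fin (M+N) × Fin (M+N)) = (q1, q1) := by rw [hp1, hp2]
      rw [if_pos hb]
      have c1 : (p1, p2).1 = (p1, p2).2 ∧ (p1, p2) = (q1, q1) := ⟨hp1.trans hp2.symm, hp⟩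
      rw [if_pos c1, if_neg (fun hh => hirr hh.1 : ¬ (q1 < q1 ∧ (p1,p2) = (q1,q1))),
        if_neg (fun hh => hirr hh.1 : ¬ (q1 < q1 ∧ (p1,p2) = (q1,q1))),
        if_neg (fun hh => hirr hh.1 : ¬ (q1 < q1 ∧ (p1,p2) = (q1,q1)))]
      show (-1:ℂ)^(par M p2 * par M p1) * _ = _ + 0 + 0 + 0
      rw [hp1, hp2]
      unfold par
      by_cases hm : (q1:ℕ) < M <;> simp [hm]
    · have hb : ¬ (((p2, p1) : Fin (M+N) × Fin (M+N)) = (q1, q1)) := by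
        simp only [Prod.mk.injEq]
        rintro ⟨a, b⟩; exact hp (by rw [a, b])
      rw [if_neg hb]
      rw [if_neg (fun hh => hp hh.2 : ¬ ((p1,p2).1 = (p1,p2).2 ∧ (p1,p2) = (q1,q1))),
        if_neg (fun hh => hirr hh.1 : ¬ (q1 < q1 ∧ (p1,p2) = (q1,q1))),
        if_neg (fun hh => hirr hh.1 : ¬ (q1 < q1 ∧ (p1,p2) = (q1,q1))),
        if_neg (fun hh => hirr hh.1 : ¬ (q1 < q1 ∧ (p1,p2) = (q1,q1)))]
      ring
  · -- q2 < q1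
    have hc2 := (hcol q2 q1 h (p2, p1)).2
    simp only [] at hc2 ⊢
    rw [hc2]
    have hne : q2 ≠ q1 := ne_of_lt h
    have hnlt : ¬ q1 < q2 := asymm h
    by_cases hp : (p1, p2) = (q1, q2)
    · have hp1 : p1 = q1 := congrArg Prod.fst hp
      have hp2 : p2 = q2 := congrArg Prod.snd hp
      have hb : bas2 q2 q1 (p2, p1) = 1 := by simp [bas2, hp1, hp2]
      have hphase : (-1:ℂ)^(par M p2 * par M p1) = (-1:ℂ)^(par M q2 * par M q1) := by
        rw [hp1, hp2]
      have c1 : ¬ ((p1, p2).1 = (p1, p2).2 ∧ (p1, p2) = (q1, q2)) := by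
        rintro ⟨a, -⟩
        exact hne (((hp1.symm.trans a).trans hp2).symm)
      rw [hb, hphase, if_pos (And.intro h hp), if_neg c1,
        if_neg (fun hh => hnlt hh.1 : ¬ (q1 < q2 ∧ (p1,p2) = (q1,q2))),
        if_neg (fun hh => hnlt hh.1 : ¬ (q1 < q2 ∧ (p1,p2) = (q2,q1)))]
      have := neg_one_sq_pow (par M q2 * par M q1)
      linear_combination this
    · have hb : bas2 q2 q1 (p2, p1) = 0 := by
        simp [bas2, Prod.ext_iff]
        rintro a b; exact absurd (by rw [a, b] : (p1, p2) = (q1, q2)) hp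
      rw [hb]
      rw [if_neg (fun hh => hp hh.2 : ¬ ((p1,p2).1 = (p1,p2).2 ∧ (p1,p2) = (q1,q2))),
        if_neg (fun hh => hp hh.2 : ¬ (q2 < q1 ∧ (p1,p2) = (q1,q2))),
        if_neg (fun hh => hnlt hh.1 : ¬ (q1 < q2 ∧ (p1,p2) = (q1,q2))),
        if_neg (fun hh => hnlt hh.1 : ¬ (q1 < q2 ∧ (p1,p2) = (q2,q1)))]
      ring

end
end

section
/- Let r,s be nonzero complex numbers with r+s ≠ 0, V = C^{M|N}, P and Q the projections onto S²V and ∧²V, and R̂ = rP − sQ. Then R̂ satisfies the braid relation R̂₁₂R̂₂₃R̂₁₂ = R̂₂₃R̂₁₂R̂₂₃ in End(V^{⊗3}). -/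
open Matrix

noncomputable section

/-- `t₁₂ = t ⊗ 1` on `V^{⊗3}`. -/
def L12 {n : ℕ} (t : Matrix (Fin n × Fin n) (Fin n × Fin n) ℂ) :
    Matrix (Fin n × Fin n × Fin n) (Fin n × Fin n × Fin n) ℂ :=
  fun p q => t (p.1, p.2.1) (q.1, q.2.1) * (if p.2.2 = q.2.2 then 1 else 0)

/-- `t₂₃ = 1 ⊗ t` on `V^{⊗3}`. -/
def L23 {n : ℕ} (t : Matrix (Fin n × Fin n) (Fin n × Fin n) ℂ) :
    Matrix (Fin n × Fin n × Fin n) (Fin n × Fin n × Fin n) ℂ :=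
  fun p q => (if p.1 = q.1 then 1 else 0) * t (p.2.1, p.2.2) (q.2.1, q.2.2)

/-- basis vector of `V^{⊗3}`. -/
def bas3 {n : ℕ} (i j k : Fin n) : Fin n × Fin n × Fin n → ℂ :=
  fun p => if p = (i, j, k) then 1 else 0

lemma bas2_eq_single {n : ℕ} (i j : Fin n) : bas2 i j = Pi.single (i, j) 1 := by
  funext p; simp [bas2, Pi.single_apply]

lemma bas3_eq_single {n : ℕ} (i j k : Fin n) : bas3 i j k = Pi.single (i, j, k) 1 := by
  funext p; simp [bas3, Pi.single_apply]

lemma mulVec_bas2 {n : ℕ} (t : Matrix (Fin n × Fin n) (Fin n × Fin n) ℂ) (i j : Fin n) :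
    t.mulVec (bas2 i j) = fun u => t u (i, j) := by
  rw [bas2_eq_single, Matrix.mulVec_single]; simp; rfl

lemma L12_two {n : ℕ} (t : Matrix (Fin n × Fin n) (Fin n × Fin n) ℂ)
    {i j a b a' b' : Fin n} {α β : ℂ}
    (h : t.mulVec (bas2 i j) = α • bas2 a b + β • bas2 a' b') (c : Fin n) :
    (L12 t).mulVec (bas3 i j c) = α • bas3 a b c + β • bas3 a' b' c := by
  rw [bas3_eq_single, Matrix.mulVec_single]
  funext p
  obtain ⟨x, y, z⟩ := p
  have h2 := congrFun h (x, y)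
  rw [mulVec_bas2] at h2
  simp only [Pi.add_apply, Pi.smul_apply, smul_eq_mul, bas2] at h2
  simp only [L12, bas3, Pi.add_apply, Pi.smul_apply, smul_eq_mul, MulOpposite.op_one, one_smul, Matrix.col_apply]
  rw [h2]
  simp only [Prod.mk.injEq]
  split_ifs <;> simp_all <;> ring

lemma L12_one {n : ℕ} (t : Matrix (Fin n × Fin n) (Fin n × Fin n) ℂ)
    {i j a b : Fin n} {α : ℂ}
    (h : t.mulVec (bas2 i j) = α • bas2 a b) (c : Fin n) :
    (L12 t).mulVec (bas3 i j c) = α • bas3 a b c := by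
  have h2 : t.mulVec (bas2 i j) = α • bas2 a b + (0 : ℂ) • bas2 a b := by
    rw [h, zero_smul, add_zero]
  have h3 := L12_two t h2 c
  rwa [zero_smul, add_zero] at h3

lemma L23_two {n : ℕ} (t : Matrix (Fin n × Fin n) (Fin n × Fin n) ℂ)
    {i j a b a' b' : Fin n} {α β : ℂ}
    (h : t.mulVec (bas2 i j) = α • bas2 a b + β • bas2 a' b') (c : Fin n) :
    (L23 t).mulVec (bas3 c i j) = α • bas3 c a b + β • bas3 c a' b' := by
  rw [bas3_eq_single, Matrix.mulVec_single]
  funext p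
  obtain ⟨x, y, z⟩ := p
  have h2 := congrFun h (y, z)
  rw [mulVec_bas2] at h2
  simp only [Pi.add_apply, Pi.smul_apply, smul_eq_mul, bas2] at h2
  simp only [L23, bas3, Pi.add_apply, Pi.smul_apply, smul_eq_mul, MulOpposite.op_one, one_smul, Matrix.col_apply]
  rw [h2]
  simp only [Prod.mk.injEq]
  split_ifs <;> simp_all <;> ring

lemma L23_one {n : ℕ} (t : Matrix (Fin n × Fin n) (Fin n × Fin n) ℂ)
    {i j a b : Fin n} {α : ℂ}
    (h : t.mulVec (bas2 i j) = α • bas2 a b) (c : Fin n) :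
    (L23 t).mulVec (bas3 c i j) = α • bas3 c a b := by
  have h2 : t.mulVec (bas2 i j) = α • bas2 a b + (0 : ℂ) • bas2 a b := by
    rw [h, zero_smul, add_zero]
  have h3 := L23_two t h2 c
  rwa [zero_smul, add_zero] at h3

set_option maxHeartbeats 2000000 in
/-- The braid relation, given the explicit action of `R` on the `bas2` basis. -/
theorem braid {n M : ℕ} (r s : ℂ) (R : Matrix (Fin n × Fin n) (Fin n × Fin n) ℂ)
    (hA : ∀ i : Fin n, (i : ℕ) < M → R.mulVec (bas2 i i) = r • bas2 i i)
    (hB : ∀ i : Fin n, ¬ (i : ℕ) < M → R.mulVec (bas2 i i) = (-s) • bas2 i i)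
    (hC : ∀ j k : Fin n, j < k → R.mulVec (bas2 j k) =
      (r - s) • bas2 j k + (r * s * (-1 : ℂ) ^ (par M j * par M k)) • bas2 k j)
    (hD : ∀ j k : Fin n, j < k → R.mulVec (bas2 k j) =
      ((-1 : ℂ) ^ (par M j * par M k)) • bas2 j k) :
    L12 R * L23 R * L12 R = L23 R * L12 R * L23 R := by
  have A12 : ∀ (a c : Fin n), (a : ℕ) < M →
      (L12 R).mulVec (bas3 a a c) = r • bas3 a a c := fun a c h => L12_one R (hA a h) c
  have B12 : ∀ (a c : Fin n), ¬ (a : ℕ) < M →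
      (L12 R).mulVec (bas3 a a c) = (-s) • bas3 a a c := fun a c h => L12_one R (hB a h) c
  have C12 : ∀ (a b c : Fin n), a < b → (L12 R).mulVec (bas3 a b c) =
      (r - s) • bas3 a b c + (r * s * (-1 : ℂ) ^ (par M a * par M b)) • bas3 b a c :=
    fun a b c h => L12_two R (hC a b h) c
  have D12 : ∀ (a b c : Fin n), a < b → (L12 R).mulVec (bas3 b a c) =
      ((-1 : ℂ) ^ (par M a * par M b)) • bas3 a b c := fun a b c h => L12_one R (hD a b h) c
  have A23 : ∀ (c a : Fin n), (a : ℕ) < M →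
      (L23 R).mulVec (bas3 c a a) = r • bas3 c a a := fun c a h => L23_one R (hA a h) c
  have B23 : ∀ (c a : Fin n), ¬ (a : ℕ) < M →
      (L23 R).mulVec (bas3 c a a) = (-s) • bas3 c a a := fun c a h => L23_one R (hB a h) c
  have C23 : ∀ (c a b : Fin n), a < b → (L23 R).mulVec (bas3 c a b) =
      (r - s) • bas3 c a b + (r * s * (-1 : ℂ) ^ (par M a * par M b)) • bas3 c b a :=
    fun c a b h => L23_two R (hC a b h) c
  have D23 : ∀ (c a b : Fin n), a < b → (L23 R).mulVec (bas3 c b a) =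
      ((-1 : ℂ) ^ (par M a * par M b)) • bas3 c a b := fun c a b h => L23_one R (hD a b h) c
  have key : ∀ i j k : Fin n,
      (L12 R).mulVec ((L23 R).mulVec ((L12 R).mulVec (bas3 i j k)))
        = (L23 R).mulVec ((L12 R).mulVec ((L23 R).mulVec (bas3 i j k))) := by
    intro i j k
    rcases lt_trichotomy i j with hij | rfl | hij
    · rcases lt_trichotomy j k with hjk | rfl | hjk
      · -- i < j < k
        have hik : i < k := hij.trans hjk
        by_cases hi : (i : ℕ) < M <;> by_cases hj : (j : ℕ) < M <;> by_cases hk : (k : ℕ) < M <;>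
          simp only [A12, B12, C12, D12, A23, B23, C23, D23,
            Matrix.mulVec_add, Matrix.mulVec_smul, smul_add, smul_smul, not_false_eq_true, hij, hjk, hik, hi, hj, hk] <;>
          simp [par, hi, hj, hk] <;> module
      · -- i < j = k
        by_cases hi : (i : ℕ) < M <;> by_cases hj : (j : ℕ) < M <;>
          simp only [A12, B12, C12, D12, A23, B23, C23, D23,
            Matrix.mulVec_add, Matrix.mulVec_smul, smul_add, smul_smul, not_false_eq_true, hij, hi, hj] <;>
          simp [par, hi, hj] <;> module
      · -- i < j, k < j
        rcases lt_trichotomy i k with hik | rfl | hik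
        · -- i < k < j
          by_cases hi : (i : ℕ) < M <;> by_cases hj : (j : ℕ) < M <;> by_cases hk : (k : ℕ) < M <;>
            simp only [A12, B12, C12, D12, A23, B23, C23, D23,
              Matrix.mulVec_add, Matrix.mulVec_smul, smul_add, smul_smul, not_false_eq_true, hij, hjk, hik, hi, hj, hk] <;>
            simp [par, hi, hj, hk] <;> module
        · -- i = k < j
          by_cases hi : (i : ℕ) < M <;> by_cases hj : (j : ℕ) < M <;>
            simp only [A12, B12, C12, D12, A23, B23, C23, D23,
              Matrix.mulVec_add, Matrix.mulVec_smul, smul_add, smul_smul, not_false_eq_true, hij, hjk, hi, hj] <;>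
            simp [par, hi, hj] <;> module
        · -- k < i < j
          by_cases hi : (i : ℕ) < M <;> by_cases hj : (j : ℕ) < M <;> by_cases hk : (k : ℕ) < M <;>
            simp only [A12, B12, C12, D12, A23, B23, C23, D23,
              Matrix.mulVec_add, Matrix.mulVec_smul, smul_add, smul_smul, not_false_eq_true, hij, hjk, hik, hi, hj, hk] <;>
            simp [par, hi, hj, hk] <;> module
    · rcases lt_trichotomy i k with hik | rfl | hik
      · -- i = j < k
        by_cases hi : (i : ℕ) < M <;> by_cases hk : (k : ℕ) < M <;>
          simp only [A12, B12, C12, D12, A23, B23, C23, D23,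
            Matrix.mulVec_add, Matrix.mulVec_smul, smul_add, smul_smul, not_false_eq_true, hik, hi, hk] <;>
          simp [par, hi, hk] <;> module
      · -- i = j = k
        by_cases hi : (i : ℕ) < M <;>
          simp only [A12, B12, C12, D12, A23, B23, C23, D23,
            Matrix.mulVec_add, Matrix.mulVec_smul, smul_add, smul_smul, not_false_eq_true, hi] <;>
          simp [par, hi] <;> module
      · -- k < j = i
        by_cases hi : (i : ℕ) < M <;> by_cases hk : (k : ℕ) < M <;>
          simp only [A12, B12, C12, D12, A23, B23, C23, D23,
            Matrix.mulVec_add, Matrix.mulVec_smul, smul_add, smul_smul, not_false_eq_true, hik, hi, hk] <;>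
          simp [par, hi, hk] <;> module
    · rcases lt_trichotomy j k with hjk | rfl | hjk
      · -- j < i, j < k
        rcases lt_trichotomy i k with hik | rfl | hik
        · -- j < i < k
          by_cases hi : (i : ℕ) < M <;> by_cases hj : (j : ℕ) < M <;> by_cases hk : (k : ℕ) < M <;>
            simp only [A12, B12, C12, D12, A23, B23, C23, D23,
              Matrix.mulVec_add, Matrix.mulVec_smul, smul_add, smul_smul, not_false_eq_true, hij, hjk, hik, hi, hj, hk] <;>
            simp [par, hi, hj, hk] <;> module
        · -- j < i = k
          by_cases hi : (i : ℕ) < M <;> by_cases hj : (j : ℕ) < M <;>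
            simp only [A12, B12, C12, D12, A23, B23, C23, D23,
              Matrix.mulVec_add, Matrix.mulVec_smul, smul_add, smul_smul, not_false_eq_true, hij, hjk, hi, hj] <;>
            simp [par, hi, hj] <;> module
        · -- j < k < i
          by_cases hi : (i : ℕ) < M <;> by_cases hj : (j : ℕ) < M <;> by_cases hk : (k : ℕ) < M <;>
            simp only [A12, B12, C12, D12, A23, B23, C23, D23,
              Matrix.mulVec_add, Matrix.mulVec_smul, smul_add, smul_smul, not_false_eq_true, hij, hjk, hik, hi, hj, hk] <;>
            simp [par, hi, hj, hk] <;> module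
      · -- k = j < i
        by_cases hi : (i : ℕ) < M <;> by_cases hj : (j : ℕ) < M <;>
          simp only [A12, B12, C12, D12, A23, B23, C23, D23,
            Matrix.mulVec_add, Matrix.mulVec_smul, smul_add, smul_smul, not_false_eq_true, hij, hi, hj] <;>
          simp [par, hi, hj] <;> module
      · -- k < j < i
        have hik : k < i := hjk.trans hij
        by_cases hi : (i : ℕ) < M <;> by_cases hj : (j : ℕ) < M <;> by_cases hk : (k : ℕ) < M <;>
          simp only [A12, B12, C12, D12, A23, B23, C23, D23,
            Matrix.mulVec_add, Matrix.mulVec_smul, smul_add, smul_smul, not_false_eq_true, hij, hjk, hik, hi, hj, hk] <;>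
          simp [par, hi, hj, hk] <;> module
  ext p q
  have h := congrFun (key q.1 q.2.1 q.2.2) p
  have hb : bas3 q.1 q.2.1 q.2.2 = Pi.single q 1 := by
    funext p'; simp [bas3, Pi.single_apply]
  rw [hb, Matrix.mulVec_mulVec, Matrix.mulVec_mulVec, Matrix.mulVec_mulVec,
    Matrix.mulVec_mulVec, Matrix.mulVec_single] at h
  simpa using h

/-- `R̂ = rP − sQ` satisfies the braid relation
`R̂₁₂R̂₂₃R̂₁₂ = R̂₂₃R̂₁₂R̂₂₃` on `V^{⊗3}`. -/
theorem stmt3 (M N : ℕ) (r s : ℂ) (hr : r ≠ 0) (hs : s ≠ 0) (hrs : r + s ≠ 0)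
    (P Q : Matrix (Fin (M + N) × Fin (M + N)) (Fin (M + N) × Fin (M + N)) ℂ)
    (hP1 : ∀ v ∈ S2 (M + N) M s, P.mulVec v = v)
    (hP2 : ∀ v ∈ W2 (M + N) M r, P.mulVec v = 0)
    (hQ1 : ∀ v ∈ S2 (M + N) M s, Q.mulVec v = 0)
    (hQ2 : ∀ v ∈ W2 (M + N) M r, Q.mulVec v = v) :
    L12 (r • P - s • Q) * L23 (r • P - s • Q) * L12 (r • P - s • Q)
      = L23 (r • P - s • Q) * L12 (r • P - s • Q) * L23 (r • P - s • Q) := by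
  set R := r • P - s • Q with hR
  have hRv : ∀ v ∈ S2 (M + N) M s, R.mulVec v = r • v := by
    intro v hv
    rw [hR, Matrix.sub_mulVec, Matrix.smul_mulVec, Matrix.smul_mulVec,
      hP1 v hv, hQ1 v hv, smul_zero, sub_zero]
  have hRw : ∀ v ∈ W2 (M + N) M r, R.mulVec v = (-s) • v := by
    intro v hv
    rw [hR, Matrix.sub_mulVec, Matrix.smul_mulVec, Matrix.smul_mulVec,
      hP2 v hv, hQ2 v hv, smul_zero, zero_sub, neg_smul]
  have hA : ∀ i : Fin (M + N), (i : ℕ) < M → R.mulVec (bas2 i i) = r • bas2 i i := by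
    intro i h
    exact hRv _ (Submodule.subset_span (Or.inl ⟨i, h, rfl⟩))
  have hB : ∀ i : Fin (M + N), ¬ (i : ℕ) < M → R.mulVec (bas2 i i) = (-s) • bas2 i i := by
    intro i h
    exact hRw _ (Submodule.subset_span (Or.inl ⟨i, not_lt.mp h, rfl⟩))
  have hu : ∀ j k : Fin (M + N), j < k →
      R.mulVec (bas2 j k + ((-1 : ℂ) ^ (par M j * par M k) * s) • bas2 k j)
        = r • (bas2 j k + ((-1 : ℂ) ^ (par M j * par M k) * s) • bas2 k j) := by
    intro j k h
    exact hRv _ (Submodule.subset_span (Or.inr ⟨j, k, h, rfl⟩))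
  have hw : ∀ j k : Fin (M + N), j < k →
      R.mulVec (bas2 j k - ((-1 : ℂ) ^ (par M j * par M k) * r) • bas2 k j)
        = (-s) • (bas2 j k - ((-1 : ℂ) ^ (par M j * par M k) * r) • bas2 k j) := by
    intro j k h
    exact hRw _ (Submodule.subset_span (Or.inr ⟨j, k, h, rfl⟩))
  have hC : ∀ j k : Fin (M + N), j < k → R.mulVec (bas2 j k) =
      (r - s) • bas2 j k + (r * s * (-1 : ℂ) ^ (par M j * par M k)) • bas2 k j := by
    intro j k h
    set e : ℂ := (-1 : ℂ) ^ (par M j * par M k) with he'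
    apply smul_right_injective _ hrs
    have step1 : (r + s) • bas2 j k =
        r • (bas2 j k + (e * s) • bas2 k j) + s • (bas2 j k - (e * r) • bas2 k j) := by
      module
    show (r + s) • R.mulVec (bas2 j k) = _
    rw [← Matrix.mulVec_smul, step1, Matrix.mulVec_add, Matrix.mulVec_smul, Matrix.mulVec_smul,
      hu j k h, hw j k h]
    module
  have hD : ∀ j k : Fin (M + N), j < k → R.mulVec (bas2 k j) =
      ((-1 : ℂ) ^ (par M j * par M k)) • bas2 j k := by
    intro j k h
    set e : ℂ := (-1 : ℂ) ^ (par M j * par M k) with he'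
    have hee : e * e = 1 := by rw [he', ← mul_pow]; norm_num
    have hne : e * (r + s) ≠ 0 := by
      apply mul_ne_zero _ hrs
      rw [he']
      exact pow_ne_zero _ (by norm_num)
    apply smul_right_injective _ hne
    have step1 : (e * (r + s)) • bas2 k j =
        (bas2 j k + (e * s) • bas2 k j) - (bas2 j k - (e * r) • bas2 k j) := by
      module
    show (e * (r + s)) • R.mulVec (bas2 k j) = (e * (r + s)) • (e • bas2 j k)
    rw [← Matrix.mulVec_smul, step1, Matrix.mulVec_sub, hu j k h, hw j k h,
      smul_smul, show e * (r + s) * e = (e * e) * (r + s) from by ring, hee, one_mul]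
    module
  exact braid r s R hA hB hC hD

end
end

section
/- Let A be an associative C-algebra with elements e₁, e₂, e₃ and nonzero scalars r,s satisfying e₁²e₂ − (r+s)e₁e₂e₁ + rs e₂e₁² = 0, e₁e₂e₁e₂ = rs e₂e₁e₂e₁, e₁e₃ = e₃e₁, and e₂² = 0. Define P = e₁e₂e₃e₂ + rs e₃e₂e₁e₂ + e₂e₁e₂e₃ + rs e₂e₃e₂e₁ − (r+s) e₂e₁e₃e₂. Then P e₁ = (rs)^{-1} e₁ P. -/
/-- in an associative ℂ-algebra with elements `e₁,e₂,e₃` satisfying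
`e₁²e₂ − (r+s)e₁e₂e₁ + rs e₂e₁² = 0`, `e₁e₂e₁e₂ = rs e₂e₁e₂e₁`, `e₁e₃ = e₃e₁` and
`e₂² = 0`, the element
`P = e₁e₂e₃e₂ + rs e₃e₂e₁e₂ + e₂e₁e₂e₃ + rs e₂e₃e₂e₁ − (r+s) e₂e₁e₃e₂`
satisfies `P e₁ = (rs)^{-1} e₁ P`. -/
theorem stmt10 {A : Type*} [Ring A] [Algebra ℂ A] (r s : ℂ) (hr : r ≠ 0) (hs : s ≠ 0)
    (e₁ e₂ e₃ : A)
    (h1 : e₁ ^ 2 * e₂ - (r + s) • (e₁ * e₂ * e₁) + (r * s) • (e₂ * e₁ ^ 2) = 0)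
    (h2 : e₁ * e₂ * e₁ * e₂ = (r * s) • (e₂ * e₁ * e₂ * e₁))
    (h3 : e₁ * e₃ = e₃ * e₁)
    (h4 : e₂ ^ 2 = 0)
    (P : A)
    (hP : P = e₁ * e₂ * e₃ * e₂ + (r * s) • (e₃ * e₂ * e₁ * e₂) + e₂ * e₁ * e₂ * e₃
        + (r * s) • (e₂ * e₃ * e₂ * e₁) - (r + s) • (e₂ * e₁ * e₃ * e₂)) :
    P * e₁ = (r * s)⁻¹ • (e₁ * P) := by
  have hrs : r * s ≠ 0 := mul_ne_zero hr hs
  suffices h : (r * s) • (P * e₁) = e₁ * P by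
    rw [← h, smul_smul, inv_mul_cancel₀ hrs, one_smul]
  -- right-assoc versions of hypotheses
  have h1' : e₁ * (e₁ * e₂) = (r + s) • (e₁ * (e₂ * e₁)) - (r * s) • (e₂ * (e₁ * e₁)) := by
    rw [sub_add] at h1
    have := sub_eq_zero.mp h1
    simpa [pow_two, mul_assoc] using this
  have h2' : e₁ * (e₂ * (e₁ * e₂)) = (r * s) • (e₂ * (e₁ * (e₂ * e₁))) := by
    simpa [mul_assoc] using h2
  have hca : ∀ x : A, e₁ * (e₃ * x) = e₃ * (e₁ * x) := by
    intro x; rw [← mul_assoc, h3, mul_assoc]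
  subst hP
  -- reduce each monomial
  have L1 : e₁ * (e₁ * (e₂ * (e₃ * e₂)))
      = (r + s) • (e₁ * (e₂ * (e₃ * (e₁ * e₂)))) - (r * s) • (e₂ * (e₃ * (e₁ * (e₁ * e₂)))) := by
    calc e₁ * (e₁ * (e₂ * (e₃ * e₂))) = (e₁ * (e₁ * e₂)) * (e₃ * e₂) := by
          simp [mul_assoc]
      _ = ((r + s) • (e₁ * (e₂ * e₁)) - (r * s) • (e₂ * (e₁ * e₁))) * (e₃ * e₂) := by rw [h1']
      _ = (r + s) • (e₁ * (e₂ * (e₁ * (e₃ * e₂)))) - (r * s) • (e₂ * (e₁ * (e₁ * (e₃ * e₂)))) := by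
          simp [sub_mul, smul_mul_assoc, mul_assoc]
      _ = _ := by rw [hca, hca]
  have L2 : e₁ * (e₃ * (e₂ * (e₁ * e₂))) = (r * s) • (e₃ * (e₂ * (e₁ * (e₂ * e₁)))) := by
    rw [hca, h2', mul_smul_comm]
  have L3 : e₁ * (e₂ * (e₁ * (e₂ * e₃))) = (r * s) • (e₂ * (e₁ * (e₂ * (e₁ * e₃)))) := by
    calc e₁ * (e₂ * (e₁ * (e₂ * e₃))) = (e₁ * (e₂ * (e₁ * e₂))) * e₃ := by simp [mul_assoc]
      _ = (r * s) • ((e₂ * (e₁ * (e₂ * e₁))) * e₃) := by rw [h2', smul_mul_assoc]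
      _ = _ := by simp [mul_assoc]
  have L5 : e₁ * (e₂ * (e₁ * (e₃ * e₂))) = e₁ * (e₂ * (e₃ * (e₁ * e₂))) := by rw [hca]
  have R3 : e₂ * (e₁ * (e₂ * (e₃ * e₁))) = e₂ * (e₁ * (e₂ * (e₁ * e₃))) := by rw [← h3]
  have R5 : e₂ * (e₁ * (e₃ * (e₂ * e₁))) = e₂ * (e₃ * (e₁ * (e₂ * e₁))) := by rw [hca]
  have key : e₂ * (e₃ * (e₁ * (e₁ * e₂)))
      = (r + s) • (e₂ * (e₃ * (e₁ * (e₂ * e₁)))) - (r * s) • (e₂ * (e₃ * (e₂ * (e₁ * e₁)))) := by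
    rw [h1']; simp [mul_sub, mul_smul_comm]
  simp only [add_mul, sub_mul, smul_mul_assoc, mul_add, mul_sub, mul_smul_comm, mul_assoc]
  rw [L1, L2, L3, L5, R3, R5, key]
  module
end

section
/- Let r,s be nonzero complex numbers such that rs^{-1} is not a root of unity, and let V^∞ be the vector space with basis {y_n : y ∈ {1,2,3,4}, n ∈ Z}. Define operators k₁, k₂, k₃, l₁, l₂, l₃, e₁, e₂, e₃, f₁, f₂, f₃ on V^∞ by (for a fixed x ∈ C^×): k₁(y_n) shifts index n to n+1 with coefficient s,r,1,1 for y=1,2,3,4; k₃(y_n) shifts n to n−1 with coefficient 1,1,r,s; k₂(y_n) = y_n times 1,s,s,1; l_i = k_i with r,s interchanged; e₁(2_n) = (1−r^{-1}s) 1_{n+1} and e₁ kills 1_n,3_n,4_n; f₁(1_n) = (1−rs^{-1}) 2_n; e₃(4_n) = (1−rs^{-1}) 3_{n−1}; f₃(3_n) = (1−r^{-1}s) 4_n; e₂(3_n) = (r^{-1}s−1) 2_n and e₂(1_n) = (r^{-1}s−1) x (rs)^{-n} 4_n; f₂(2_n) = (rs^{-1}−1) 3_n, with all unspecified actions zero.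 Then the element P = e₁e₂e₃e₂ + rs e₃e₂e₁e₂ + e₂e₁e₂e₃ + rs e₂e₃e₂e₁ − (r+s) e₂e₁e₃e₂ acts on V^∞ by P(y_n) = x (rs)^{-n} (1−r^{-1}s)(1−rs^{-1})(r^{-1}s−1)² y_n. -/
noncomputable section

/-- `V^∞` with basis `y_n`, `y ∈ {1,2,3,4}` (coded as `Fin 4`), `n ∈ ℤ`. -/
abbrev Vinf := Fin 4 × ℤ → ℂ

/-- the basis vector `y_n`. -/
def basV (y : Fin 4) (n : ℤ) : Vinf := fun p => if p = (y, n) then 1 else 0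

/-- `e₁(2_n) = (1−r⁻¹s) 1_{n+1}`, other basis vectors killed. -/
def e1 (r s : ℂ) : Vinf → Vinf := fun v p =>
  if p.1 = 0 then (1 - r⁻¹ * s) * v (1, p.2 - 1) else 0

/-- `e₂(3_n) = (r⁻¹s−1) 2_n`, `e₂(1_n) = (r⁻¹s−1) x (rs)^{-n} 4_n`, others killed. -/
def e2 (r s x : ℂ) : Vinf → Vinf := fun v p =>
  if p.1 = 1 then (r⁻¹ * s - 1) * v (2, p.2)
  else if p.1 = 3 then (r⁻¹ * s - 1) * x * (r * s) ^ (-p.2) * v (0, p.2) else 0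

/-- `e₃(4_n) = (1−rs⁻¹) 3_{n−1}`, others killed. -/
def e3 (r s : ℂ) : Vinf → Vinf := fun v p =>
  if p.1 = 2 then (1 - r * s⁻¹) * v (3, p.2 + 1) else 0

/-- `P = e₁e₂e₃e₂ + rs e₃e₂e₁e₂ + e₂e₁e₂e₃ + rs e₂e₃e₂e₁ − (r+s) e₂e₁e₃e₂`. -/
def Pop (r s x : ℂ) : Vinf → Vinf := fun v =>
  e1 r s (e2 r s x (e3 r s (e2 r s x v)))
  + (r * s) • e3 r s (e2 r s x (e1 r s (e2 r s x v)))
  + e2 r s x (e1 r s (e2 r s x (e3 r s v)))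
  + (r * s) • e2 r s x (e3 r s (e2 r s x (e1 r s v)))
  - (r + s) • e2 r s x (e1 r s (e3 r s (e2 r s x v)))

section lemmas
variable (r s x : ℂ) (n : ℤ)

lemma e1_smul (c : ℂ) (v : Vinf) : e1 r s (c • v) = c • e1 r s v := by
  funext p; simp [e1, smul_eq_mul]; split_ifs <;> ring
lemma e2_smul (c : ℂ) (v : Vinf) : e2 r s x (c • v) = c • e2 r s x v := by
  funext p; simp [e2, smul_eq_mul]; split_ifs <;> ring
lemma e3_smul (c : ℂ) (v : Vinf) : e3 r s (c • v) = c • e3 r s v := by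
  funext p; simp [e3, smul_eq_mul]; split_ifs <;> ring
lemma e1_zero : e1 r s (0 : Vinf) = 0 := by funext p; simp [e1]
lemma e2_zero : e2 r s x (0 : Vinf) = 0 := by funext p; simp [e2]
lemma e3_zero : e3 r s (0 : Vinf) = 0 := by funext p; simp [e3]

lemma e1_b0 : e1 r s (basV 0 n) = 0 := by
  funext p; simp [e1, basV, Prod.ext_iff]
lemma e1_b1 : e1 r s (basV 1 n) = (1 - r⁻¹ * s) • basV 0 (n+1) := by
  funext p; obtain ⟨a, m⟩ := p
  simp [e1, basV, Prod.ext_iff, smul_eq_mul]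
  split_ifs <;> (try omega) <;> simp_all <;> omega
lemma e1_b2 : e1 r s (basV 2 n) = 0 := by
  funext p; simp [e1, basV, Prod.ext_iff]
lemma e1_b3 : e1 r s (basV 3 n) = 0 := by
  funext p; simp [e1, basV, Prod.ext_iff]

lemma e2_b0 : e2 r s x (basV 0 n) = ((r⁻¹ * s - 1) * x * (r * s) ^ (-n)) • basV 3 n := by
  funext p; obtain ⟨a, m⟩ := p
  simp [e2, basV, Prod.ext_iff, smul_eq_mul]
  split_ifs <;> simp_all
lemma e2_b1 : e2 r s x (basV 1 n) = 0 := by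
  funext p; simp [e2, basV, Prod.ext_iff]
lemma e2_b2 : e2 r s x (basV 2 n) = (r⁻¹ * s - 1) • basV 1 n := by
  funext p; obtain ⟨a, m⟩ := p
  simp [e2, basV, Prod.ext_iff, smul_eq_mul]
  split_ifs <;> simp_all
lemma e2_b3 : e2 r s x (basV 3 n) = 0 := by
  funext p; simp [e2, basV, Prod.ext_iff]

lemma e3_b0 : e3 r s (basV 0 n) = 0 := by
  funext p; simp [e3, basV, Prod.ext_iff]
lemma e3_b1 : e3 r s (basV 1 n) = 0 := by
  funext p; simp [e3, basV, Prod.ext_iff]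
lemma e3_b2 : e3 r s (basV 2 n) = 0 := by
  funext p; simp [e3, basV, Prod.ext_iff]
lemma e3_b3 : e3 r s (basV 3 n) = (1 - r * s⁻¹) • basV 2 (n-1) := by
  funext p; obtain ⟨a, m⟩ := p
  simp [e3, basV, Prod.ext_iff, smul_eq_mul]
  split_ifs <;> (try omega) <;> simp_all <;> omega

end lemmas


/-- `P` acts on `V^∞` by
`P(y_n) = x (rs)^{-n} (1−r⁻¹s)(1−rs⁻¹)(r⁻¹s−1)² y_n`. -/
theorem stmt11 (r s x : ℂ) (hr : r ≠ 0) (hs : s ≠ 0) (hx : x ≠ 0)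
    (hroot : ∀ k : ℕ, 0 < k → (r * s⁻¹) ^ k ≠ 1) :
    ∀ (y : Fin 4) (n : ℤ),
      Pop r s x (basV y n)
        = (x * (r * s) ^ (-n) * (1 - r⁻¹ * s) * (1 - r * s⁻¹) * (r⁻¹ * s - 1) ^ 2) •
            basV y n := by

  have hrs : r * s ≠ 0 := mul_ne_zero hr hs
  have hkey : ∀ n : ℤ, (r * s) * (r * s) ^ (-(n+1)) = (r * s) ^ (-n) := fun n => by
    rw [mul_comm, ← zpow_add_one₀ hrs]; congr 1; ring
  have key : ∀ (y : Fin 4) (n : ℤ),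
      Pop r s x (basV y n)
        = (x * (r * s) ^ (-n) * (1 - r⁻¹ * s) * (1 - r * s⁻¹) * (r⁻¹ * s - 1) ^ 2) •
            basV y n := by
    intro y n
    fin_cases y
    · show Pop r s x (basV 0 n) = _ • basV 0 n
      simp only [Pop, e1_smul, e2_smul, e3_smul, e1_zero, e2_zero, e3_zero,
        e1_b0, e1_b1, e1_b2, e1_b3, e2_b0, e2_b1, e2_b2, e2_b3,
        e3_b0, e3_b1, e3_b2, e3_b3, smul_zero, add_zero, zero_add, zero_sub, sub_zero,
        smul_smul, neg_zero, sub_add_cancel]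
      congr 1
      ring
    · show Pop r s x (basV 1 n) = _ • basV 1 n
      simp only [Pop, e1_smul, e2_smul, e3_smul, e1_zero, e2_zero, e3_zero,
        e1_b0, e1_b1, e1_b2, e1_b3, e2_b0, e2_b1, e2_b2, e2_b3,
        e3_b0, e3_b1, e3_b2, e3_b3, smul_zero, add_zero, zero_add, zero_sub, sub_zero,
        smul_smul, neg_zero, add_sub_cancel_right]
      rw [← hkey n]
      congr 1
      ring
    · show Pop r s x (basV 2 n) = _ • basV 2 n
      simp only [Pop, e1_smul, e2_smul, e3_smul, e1_zero, e2_zero, e3_zero,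
        e1_b0, e1_b1, e1_b2, e1_b3, e2_b0, e2_b1, e2_b2, e2_b3,
        e3_b0, e3_b1, e3_b2, e3_b3, smul_zero, add_zero, zero_add, zero_sub, sub_zero,
        smul_smul, neg_zero, add_sub_cancel_right]
      rw [← hkey n]
      congr 1
      ring
    · show Pop r s x (basV 3 n) = _ • basV 3 n
      simp only [Pop, e1_smul, e2_smul, e3_smul, e1_zero, e2_zero, e3_zero,
        e1_b0, e1_b1, e1_b2, e1_b3, e2_b0, e2_b1, e2_b2, e2_b3,
        e3_b0, e3_b1, e3_b2, e3_b3, smul_zero, add_zero, zero_add, zero_sub, sub_zero,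
        smul_smul, neg_zero, sub_add_cancel]
      congr 1
      ring
  exact key


end
end
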